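/- Let ρ, σ be density matrices on ℂ^d, and let ψ and φ be any purifications of ρ and σ respectively. Then the Bures distance satisfies D_B(ρ,σ) ≤ √(2 − 2|⟨ψ,φ⟩|) ≤ ‖ψ − φ‖₂. -/

import Mathlib

open scoped BigOperators ComplexOrder
open Matrix

/-- The eigenvalues of a Hermitian matrix, listed in increasing order
(junk value `0` for non-Hermitian matrices). -/
noncomputable def eigsInc {d : ℕ} (A : Matrix (Fin d) (Fin d) ℂ) : Fin d → ℝ :=
  @dite _ A.IsHermitian (Classical.propDecidable _)
    (fun h => h.eigenvalues ∘ Tuple.sort h.eigenvalues) (fun _ => 0)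

/-- The eigenvalues of a Hermitian matrix, listed in decreasing order. -/
noncomputable def eigsDec {d : ℕ} (A : Matrix (Fin d) (Fin d) ℂ) : Fin d → ℝ :=
  fun k => eigsInc A k.rev

/-- Ergotropy `E(ρ,H) = tr(ρH) - ∑ₖ λₖ Eₖ` with `λ` decreasing, `E` increasing. -/
noncomputable def ergotropy {d : ℕ} (ρ H : Matrix (Fin d) (Fin d) ℂ) : ℝ :=
  ((ρ * H).trace).re - ∑ k : Fin d, eigsDec ρ k * eigsInc H k

/-- Operator norm (ℓ² → ℓ²) of a matrix. -/
noncomputable def opNorm {d : ℕ} (A : Matrix (Fin d) (Fin d) ℂ) : ℝ :=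
  ‖Matrix.toEuclideanCLM (𝕜 := ℂ) A‖

/-- The square root of a positive semidefinite matrix, as `Matrix.PosSemidef.sqrt` was defined
in the older Mathlib (since removed in favour of `CFC.sqrt`). -/
noncomputable def Matrix.PosSemidef.sqrt {n : Type*} [Fintype n] [DecidableEq n]
    {A : Matrix n n ℂ} (hA : A.PosSemidef) : Matrix n n ℂ :=
  hA.1.eigenvectorUnitary.1 * diagonal ((↑) ∘ (Real.sqrt ∘ hA.1.eigenvalues)) *
    (star hA.1.eigenvectorUnitary : Matrix n n ℂ)

/-- Trace norm `‖A‖₁ = tr √(AᴴA)`. -/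
noncomputable def traceNorm {d : ℕ} (A : Matrix (Fin d) (Fin d) ℂ) : ℝ :=
  ((Matrix.posSemidef_conjTranspose_mul_self A).sqrt.trace).re

/-- Trace distance. -/
noncomputable def traceDist {d : ℕ} (ρ σ : Matrix (Fin d) (Fin d) ℂ) : ℝ :=
  traceNorm (ρ - σ) / 2

/-- Positive semidefinite square root (junk value `0` on non-PSD matrices). -/
noncomputable def psdSqrt {d : ℕ} (A : Matrix (Fin d) (Fin d) ℂ) : Matrix (Fin d) (Fin d) ℂ :=
  @dite _ A.PosSemidef (Classical.propDecidable _) (fun h => h.sqrt) (fun _ => 0)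

/-- Uhlmann fidelity `F(ρ,σ) = (tr √(√ρ σ √ρ))²`. -/
noncomputable def fidelity {d : ℕ} (ρ σ : Matrix (Fin d) (Fin d) ℂ) : ℝ :=
  ((psdSqrt (psdSqrt ρ * σ * psdSqrt ρ)).trace).re ^ 2

/-- Bures distance. -/
noncomputable def buresDist {d : ℕ} (ρ σ : Matrix (Fin d) (Fin d) ℂ) : ℝ :=
  Real.sqrt (2 - 2 * Real.sqrt (fidelity ρ σ))

/-- Hilbert–Schmidt distance. -/
noncomputable def hsDist {d : ℕ} (ρ σ : Matrix (Fin d) (Fin d) ℂ) : ℝ :=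
  Real.sqrt ((((ρ - σ)ᴴ * (ρ - σ)).trace).re)

/-- von Neumann entropy `S(ρ) = -tr(ρ ln ρ) = -∑ᵢ λᵢ ln λᵢ`. -/
noncomputable def vnEntropy {d : ℕ} (ρ : Matrix (Fin d) (Fin d) ℂ) : ℝ :=
  -∑ i : Fin d, eigsInc ρ i * Real.log (eigsInc ρ i)

/-- `ψ ∈ ℂᵈ ⊗ ℂᵈ` is a purification of `ρ`. -/
def IsPurification {d : ℕ} (ρ : Matrix (Fin d) (Fin d) ℂ)
    (ψ : EuclideanSpace ℂ (Fin d × Fin d)) : Prop :=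
  ‖ψ‖ = 1 ∧ ∀ i j, ρ i j = ∑ k : Fin d, ψ (i, k) * (starRingEnd ℂ) (ψ (j, k))

/-- Partial trace over the second tensor factor of `|ψ⟩⟨ψ|`. -/
noncomputable def partialTrace {d : ℕ} (ψ : EuclideanSpace ℂ (Fin d × Fin d)) :
    Matrix (Fin d) (Fin d) ℂ :=
  Matrix.of fun i j => ∑ k : Fin d, ψ (i, k) * (starRingEnd ℂ) (ψ (j, k))

lemma Matrix.PosSemidef.sqrt_mul_self {n : Type*} [Fintype n] [DecidableEq n]
    {A : Matrix n n ℂ} (hA : A.PosSemidef) : hA.sqrt * hA.sqrt = A := by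
  set U : Matrix n n ℂ := hA.1.eigenvectorUnitary.1 with hU
  have hUU : (star hA.1.eigenvectorUnitary : Matrix n n ℂ) * U = 1 :=
    Unitary.coe_star_mul_self _
  have hspec := hA.1.spectral_theorem
  rw [Unitary.conjStarAlgAut_apply] at hspec
  conv_rhs => rw [hspec]
  simp only [Matrix.PosSemidef.sqrt, ← hU]
  calc U * diagonal ((↑) ∘ (Real.sqrt ∘ hA.1.eigenvalues)) * (star hA.1.eigenvectorUnitary : Matrix n n ℂ) *
        (U * diagonal ((↑) ∘ (Real.sqrt ∘ hA.1.eigenvalues)) * (star hA.1.eigenvectorUnitary : Matrix n n ℂ))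
      = U * (diagonal ((↑) ∘ (Real.sqrt ∘ hA.1.eigenvalues)) * ((star hA.1.eigenvectorUnitary : Matrix n n ℂ) * U) *
        diagonal ((↑) ∘ (Real.sqrt ∘ hA.1.eigenvalues))) * (star hA.1.eigenvectorUnitary : Matrix n n ℂ) := by
        simp only [Matrix.mul_assoc]
    _ = _ := by
      rw [hUU, Matrix.mul_one, diagonal_mul_diagonal]
      congr 3
      funext i
      simp only [Function.comp_apply]
      rw [← Complex.ofReal_mul, Real.mul_self_sqrt (hA.eigenvalues_nonneg i)]
      rfl

lemma Matrix.PosSemidef.posSemidef_sqrt {n : Type*} [Fintype n] [DecidableEq n]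
    {A : Matrix n n ℂ} (hA : A.PosSemidef) : hA.sqrt.PosSemidef := by
  have hD : (diagonal ((↑) ∘ (Real.sqrt ∘ hA.1.eigenvalues)) : Matrix n n ℂ).PosSemidef := by
    rw [posSemidef_diagonal_iff]
    intro i
    simp only [Function.comp_apply]
    exact_mod_cast Real.sqrt_nonneg _
  have h := hD.mul_mul_conjTranspose_same hA.1.eigenvectorUnitary.1
  simpa [Matrix.PosSemidef.sqrt, Matrix.star_eq_conjTranspose] using h

section BuresAux
variable {d : ℕ}

lemma trace_re_nonneg' {A : Matrix (Fin d) (Fin d) ℂ} (hA : A.PosSemidef) :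
    0 ≤ A.trace.re := by
  have h : ∀ i, 0 ≤ (A i i).re := by
    intro i
    have := hA.re_dotProduct_nonneg (Pi.single i 1)
    simpa [dotProduct, Matrix.mulVec, Pi.single_apply, Finset.sum_ite_eq] using this
  rw [Matrix.trace]
  rw [Complex.re_sum]
  simp only [Matrix.diag]
  exact Finset.sum_nonneg fun i _ => h i

lemma trace_mul_re_nonneg' {A B : Matrix (Fin d) (Fin d) ℂ}
    (hA : A.PosSemidef) (hB : B.PosSemidef) : 0 ≤ ((A * B).trace).re := by
  have h1 : A * B = hA.sqrt * (hA.sqrt * B) := by rw [← mul_assoc, hA.sqrt_mul_self]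
  rw [h1, Matrix.trace_mul_comm]
  have h2 := hB.conjTranspose_mul_mul_same hA.sqrt
  rw [hA.posSemidef_sqrt.isHermitian.eq] at h2
  exact trace_re_nonneg' (by simpa [mul_assoc] using h2)

lemma smul_posSemidef' {A : Matrix (Fin d) (Fin d) ℂ} (hA : A.PosSemidef) {c : ℝ}
    (hc : 0 ≤ c) : ((c : ℂ) • A).PosSemidef := by
  exact hA.smul (by exact_mod_cast hc)

lemma add_smul_one_posDef {A : Matrix (Fin d) (Fin d) ℂ} (hA : A.PosSemidef) {c : ℝ}
    (hc : 0 < c) : (A + (c : ℂ) • 1).PosDef := by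
  refine Matrix.PosDef.posSemidef_add hA ?_
  rw [Matrix.smul_one_eq_diagonal, Matrix.posDef_diagonal_iff]
  intro i
  exact_mod_cast hc

lemma variational {ρ σ X Y M : Matrix (Fin d) (Fin d) ℂ}
    (hX : ρ = X * Xᴴ) (hY : σ = Y * Yᴴ) (hM : M.PosSemidef) (hMd : IsUnit M.det) :
    2 * ‖(Xᴴ * Y).trace‖ ≤ ((M * ρ).trace).re + ((M⁻¹ * σ).trace).re := by
  set z := (Xᴴ * Y).trace with hz
  obtain ⟨c, hc1, hcz⟩ : ∃ c : ℂ, c * star c = 1 ∧ (c * z).re = ‖z‖ := by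
    rcases eq_or_ne z 0 with h | h
    · exact ⟨1, by simp, by simp [h]⟩
    · have hzn : (‖z‖ : ℂ) ≠ 0 := by exact_mod_cast (norm_ne_zero_iff.mpr h)
      have key : star z * z = (‖z‖ : ℂ) ^ 2 := by
        rw [Complex.star_def, ← Complex.normSq_eq_conj_mul_self,
          ← Complex.sq_norm]
        push_cast
        ring
      refine ⟨star z / ‖z‖, ?_, ?_⟩
      · rw [star_div₀, star_star, Complex.star_def, Complex.conj_ofReal, div_mul_div_comm,
          ← Complex.star_def, key, sq, div_self (mul_ne_zero hzn hzn)]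
      · rw [div_mul_eq_mul_div, key, sq, mul_div_assoc, div_self hzn, mul_one,
          Complex.ofReal_re]
  have hRH : hM.sqrt.conjTranspose = hM.sqrt := hM.posSemidef_sqrt.isHermitian
  set R := hM.sqrt with hRdef
  have hRR : R * R = M := hM.sqrt_mul_self
  have hRdet : IsUnit R.det := by
    have h1 : R.det * R.det = M.det := by rw [← Matrix.det_mul, hRR]
    have h2 : M.det ≠ 0 := by
      intro h; rw [h] at hMd; simpa using hMd
    rw [isUnit_iff_ne_zero]
    intro h
    rw [h, mul_zero] at h1
    exact h2 h1.symm
  have hRiH : R⁻¹ᴴ = R⁻¹ := by rw [Matrix.conjTranspose_nonsing_inv, hRH]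
  set A := R * (star c • X) with hA
  set B := R⁻¹ * Y with hB
  have hAH : Aᴴ = c • Xᴴ * R := by
    rw [hA, Matrix.conjTranspose_mul, Matrix.conjTranspose_smul, star_star, hRH,
      Matrix.smul_mul]
  have hAB : Aᴴ * B = c • (Xᴴ * Y) := by
    rw [hAH, hB]
    simp only [smul_mul_assoc, Matrix.mul_assoc]
    rw [← Matrix.mul_assoc R, Matrix.mul_nonsing_inv _ hRdet, Matrix.one_mul]
  have hA' : Aᴴ * A = Xᴴ * (M * X) := by
    rw [hAH, hA]
    simp only [smul_mul_assoc, mul_smul_comm, smul_smul, Matrix.mul_assoc]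
    rw [mul_comm (star c) c, hc1, one_smul, ← Matrix.mul_assoc R, hRR]
  have hB' : Bᴴ * B = Yᴴ * (M⁻¹ * Y) := by
    rw [hB, Matrix.conjTranspose_mul, hRiH, Matrix.mul_assoc, ← Matrix.mul_assoc R⁻¹,
      ← Matrix.mul_inv_rev, hRR]
  have hBA : Bᴴ * A = (c • (Xᴴ * Y))ᴴ := by
    rw [← hAB]
    conv_rhs => rw [Matrix.conjTranspose_mul, Matrix.conjTranspose_conjTranspose]
  have hE : (A - B)ᴴ * (A - B) =
      Xᴴ * (M * X) + Yᴴ * (M⁻¹ * Y) - c • (Xᴴ * Y) - (c • (Xᴴ * Y))ᴴ := by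
    rw [Matrix.conjTranspose_sub, Matrix.sub_mul, Matrix.mul_sub, Matrix.mul_sub,
      hA', hB', hAB, hBA]
    abel
  have h0 : 0 ≤ (((A - B)ᴴ * (A - B)).trace).re :=
    trace_re_nonneg' (Matrix.posSemidef_conjTranspose_mul_self _)
  rw [hE] at h0
  have t1 : (Xᴴ * (M * X)).trace = (M * ρ).trace := by
    rw [Matrix.trace_mul_comm, Matrix.mul_assoc, hX]
  have t2 : (Yᴴ * (M⁻¹ * Y)).trace = (M⁻¹ * σ).trace := by
    rw [Matrix.trace_mul_comm, Matrix.mul_assoc, hY]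
  have t3 : (c • (Xᴴ * Y)).trace = c * z := by
    rw [Matrix.trace_smul, smul_eq_mul]
  have t4 : ((c • (Xᴴ * Y))ᴴ).trace = star (c * z) := by
    rw [Matrix.trace_conjTranspose, t3]
  rw [Matrix.trace_sub, Matrix.trace_sub, Matrix.trace_add, t1, t2, t3, t4] at h0
  simp only [Complex.sub_re, Complex.add_re, Complex.conj_re, RCLike.star_def] at h0
  rw [hcz] at h0
  linarith

lemma limit_aux (a b c1 c2 : ℝ) (h : ∀ ε : ℝ, 0 < ε → a ≤ b + c1 * ε + c2 * ε ^ 2) :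
    a ≤ b := by
  have hcont : Continuous fun ε : ℝ => b + c1 * ε + c2 * ε ^ 2 := by continuity
  have hc : Filter.Tendsto (fun ε : ℝ => b + c1 * ε + c2 * ε ^ 2)
      (nhdsWithin 0 (Set.Ioi 0)) (nhds b) := by
    have h0 := (hcont.tendsto 0).mono_left (nhdsWithin_le_nhds (s := Set.Ioi (0:ℝ)))
    simpa using h0
  exact ge_of_tendsto hc (Filter.eventually_of_mem self_mem_nhdsWithin fun ε hε => h ε hε)

lemma per_eps {ρ σ P S Se X Y : Matrix (Fin d) (Fin d) ℂ}
    (hσ : σ.PosSemidef) (hP : P.PosSemidef) (hS : S.PosSemidef)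
    (hPP : P * P = ρ) (hSS : S * S = P * σ * P)
    (hX : ρ = X * Xᴴ) (hY : σ = Y * Yᴴ)
    {ε' ε : ℝ} (hε' : 0 < ε') (hε : 0 < ε)
    (hSedef : Se = S + (ε' : ℂ) • 1) :
    2 * ‖(Xᴴ * Y).trace‖ ≤ 2 * S.trace.re + ε' * d +
      (((Se⁻¹ * (P * σ + σ * P)).trace).re * ε + ((Se⁻¹ * σ).trace).re * ε ^ 2) := by
  have hSe : Se.PosDef := hSedef ▸ add_smul_one_posDef hS hε'
  have hSedet : IsUnit Se.det := isUnit_iff_ne_zero.mpr hSe.det_pos.ne'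
  set c1 := ((Se⁻¹ * (P * σ + σ * P)).trace).re with hc1def
  set c2 := ((Se⁻¹ * σ).trace).re with hc2def

  set Pe := P + (ε : ℂ) • 1 with hPedef
  have hPe : Pe.PosDef := add_smul_one_posDef hP hε
  have hPedet : IsUnit Pe.det := isUnit_iff_ne_zero.mpr hPe.det_pos.ne'
  have hPei : Pe⁻¹ᴴ = Pe⁻¹ := by
    rw [Matrix.conjTranspose_nonsing_inv, hPe.isHermitian]
  set M := Pe⁻¹ * Se * Pe⁻¹ with hMdef
  have hM : M.PosSemidef := by
    have h := hSe.posSemidef.conjTranspose_mul_mul_same Pe⁻¹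
    rwa [hPei] at h
  have hMdet : IsUnit M.det := by
    rw [isUnit_iff_ne_zero, hMdef, Matrix.det_mul, Matrix.det_mul,
      Matrix.det_nonsing_inv, Ring.inverse_eq_inv]
    have h1 : Pe.det⁻¹ ≠ 0 := inv_ne_zero hPe.det_pos.ne'
    exact mul_ne_zero (mul_ne_zero h1 hSe.det_pos.ne') h1
  have hvar := variational hX hY hM hMdet
  -- bound tr(M ρ)
  have hb : ((M * ρ).trace).re ≤ S.trace.re + ε' * d := by
    have e1 : (M * ρ).trace = (Se * (Pe⁻¹ * ρ * Pe⁻¹)).trace := by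
      have : M * ρ = Pe⁻¹ * (Se * (Pe⁻¹ * ρ)) := by simp only [hMdef, Matrix.mul_assoc]
      rw [this, Matrix.trace_mul_comm]
      congr 1
      simp only [Matrix.mul_assoc]
    have hPe2 : Pe * Pe - P * P =
        (ε : ℂ) • P + ((ε : ℂ) • P + ((ε * ε : ℝ) : ℂ) • (1 : Matrix (Fin d) (Fin d) ℂ)) := by
      simp only [hPedef, add_mul, mul_add, smul_add, smul_mul_assoc, mul_smul_comm,
        smul_smul, Matrix.mul_one, Matrix.one_mul, Complex.ofReal_mul]
      abel
    have hdiff : (Pe * Pe - P * P).PosSemidef := by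
      rw [hPe2]
      exact (smul_posSemidef' hP hε.le).add ((smul_posSemidef' hP hε.le).add
        (smul_posSemidef' Matrix.PosSemidef.one (mul_nonneg hε.le hε.le)))
    have h1K : ((1 : Matrix (Fin d) (Fin d) ℂ) - Pe⁻¹ * ρ * Pe⁻¹).PosSemidef := by
      have eK : (1 : Matrix (Fin d) (Fin d) ℂ) - Pe⁻¹ * ρ * Pe⁻¹ =
          Pe⁻¹ * (Pe * Pe - P * P) * Pe⁻¹ := by
        have h9 : Pe⁻¹ * (Pe * Pe) * Pe⁻¹ = 1 := by
          calc Pe⁻¹ * (Pe * Pe) * Pe⁻¹ = (Pe⁻¹ * Pe) * (Pe * Pe⁻¹) := by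
                simp only [Matrix.mul_assoc]
            _ = 1 := by rw [Matrix.nonsing_inv_mul _ hPedet, Matrix.mul_nonsing_inv _ hPedet,
                Matrix.one_mul]
        rw [Matrix.mul_sub, Matrix.sub_mul, ← hPP, h9]
      rw [eK]
      have h := hdiff.conjTranspose_mul_mul_same Pe⁻¹
      rwa [hPei] at h
    have h2 : 0 ≤ ((Se * (1 - Pe⁻¹ * ρ * Pe⁻¹)).trace).re :=
      trace_mul_re_nonneg' hSe.posSemidef h1K
    rw [Matrix.mul_sub, Matrix.mul_one, Matrix.trace_sub, Complex.sub_re] at h2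
    have h3 : (Se.trace).re = S.trace.re + ε' * d := by
      rw [hSedef, Matrix.trace_add, Matrix.trace_smul, Matrix.trace_one, Complex.add_re,
        smul_eq_mul, Complex.re_ofReal_mul]
      simp
    rw [e1]
    linarith
  -- bound tr(M⁻¹ σ)
  have hc : ((M⁻¹ * σ).trace).re ≤ S.trace.re + c1 * ε + c2 * ε ^ 2 := by
    have hMinv : M⁻¹ = Pe * (Se⁻¹ * Pe) := by
      rw [hMdef, Matrix.mul_inv_rev, Matrix.mul_inv_rev,
        Matrix.nonsing_inv_nonsing_inv _ hPedet]
    have e1 : (M⁻¹ * σ).trace = (Se⁻¹ * (Pe * σ * Pe)).trace := by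
      have : M⁻¹ * σ = Pe * (Se⁻¹ * (Pe * σ)) := by simp only [hMinv, Matrix.mul_assoc]
      rw [this, Matrix.trace_mul_comm]
      congr 1
      simp only [Matrix.mul_assoc]
    have e2 : Pe * σ * Pe = S * S + ((ε : ℂ) • (P * σ + σ * P) +
        ((ε * ε : ℝ) : ℂ) • σ) := by
      rw [hSS]
      simp only [hPedef, add_mul, mul_add, smul_mul_assoc, mul_smul_comm, smul_smul,
        Matrix.mul_one, Matrix.one_mul, Complex.ofReal_mul, smul_add]
      abel
    have e3 : (Se⁻¹ * (Pe * σ * Pe)).trace = (Se⁻¹ * (S * S)).trace +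
        ((ε : ℂ) * (Se⁻¹ * (P * σ + σ * P)).trace + ((ε * ε : ℝ) : ℂ) * (Se⁻¹ * σ).trace) := by
      rw [e2, Matrix.mul_add, Matrix.mul_add, Matrix.trace_add, Matrix.trace_add,
        Matrix.mul_smul, Matrix.mul_smul, Matrix.trace_smul, Matrix.trace_smul,
        smul_eq_mul, smul_eq_mul]
    have e4 : ((Se⁻¹ * (S * S)).trace).re ≤ S.trace.re := by
      have id1 : S - Se⁻¹ * (S * S) = (ε' : ℂ) • (Se⁻¹ * S) := by
        have h5 : Se⁻¹ * (Se * S) = S := by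
          rw [← Matrix.mul_assoc, Matrix.nonsing_inv_mul _ hSedet, Matrix.one_mul]
        have h6' : Se * S = S * S + (ε' : ℂ) • S := by
          rw [hSedef, add_mul, smul_mul_assoc, Matrix.one_mul]
        have h6 : Se⁻¹ * (Se * S) = Se⁻¹ * (S * S) + (ε' : ℂ) • (Se⁻¹ * S) := by
          rw [h6', Matrix.mul_add, Matrix.mul_smul]
        nth_rewrite 1 [← h5]
        rw [h6]
        abel
      have h7 : 0 ≤ ((Se⁻¹ * S).trace).re :=
        trace_mul_re_nonneg' hSe.inv.posSemidef hS
      have h8 := congrArg (fun m : Matrix (Fin d) (Fin d) ℂ => (m.trace).re) id1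
      simp only [Matrix.trace_sub, Matrix.trace_smul, Complex.sub_re, smul_eq_mul,
        Complex.re_ofReal_mul] at h8
      nlinarith
    rw [e1, e3]
    simp only [Complex.add_re, Complex.re_ofReal_mul]
    rw [hc1def, hc2def]
    nlinarith
  nlinarith

lemma key_ineq {ρ σ P S X Y : Matrix (Fin d) (Fin d) ℂ}
    (hσ : σ.PosSemidef) (hP : P.PosSemidef) (hS : S.PosSemidef)
    (hPP : P * P = ρ) (hSS : S * S = P * σ * P)
    (hX : ρ = X * Xᴴ) (hY : σ = Y * Yᴴ) :
    ‖(Xᴴ * Y).trace‖ ≤ S.trace.re := by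
  refine limit_aux _ _ ((d : ℝ) / 2) 0 fun ε' hε' => ?_
  set Se := S + (ε' : ℂ) • 1 with hSedef
  have hstep : ‖(Xᴴ * Y).trace‖ ≤ S.trace.re + (d : ℝ) / 2 * ε' := by
    refine limit_aux _ _ (((Se⁻¹ * (P * σ + σ * P)).trace).re / 2)
      (((Se⁻¹ * σ).trace).re / 2) fun ε hε => ?_
    have h := per_eps hσ hP hS hPP hSS hX hY hε' hε hSedef
    nlinarith
  nlinarith


end BuresAux

/-- The Bures distance is bounded by the Euclidean distance between
any purifications: `D_B(ρ,σ) ≤ √(2 − 2|⟨ψ,φ⟩|) ≤ ‖ψ − φ‖₂`. -/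
theorem buresDist_le_purification_dist {d : ℕ} (ρ σ : Matrix (Fin d) (Fin d) ℂ)
    (hρ : ρ.PosSemidef) (hρ1 : ρ.trace = 1)
    (hσ : σ.PosSemidef) (hσ1 : σ.trace = 1)
    (ψ φ : EuclideanSpace ℂ (Fin d × Fin d))
    (hψ : IsPurification ρ ψ) (hφ : IsPurification σ φ) :
    buresDist ρ σ ≤ Real.sqrt (2 - 2 * ‖(inner ℂ ψ φ : ℂ)‖) ∧
      Real.sqrt (2 - 2 * ‖(inner ℂ ψ φ : ℂ)‖) ≤ ‖ψ - φ‖ := by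
  rw [buresDist]
  set X : Matrix (Fin d) (Fin d) ℂ := Matrix.of fun i k => ψ (i, k) with hXdef
  set Y : Matrix (Fin d) (Fin d) ℂ := Matrix.of fun i k => φ (i, k) with hYdef
  have hX : ρ = X * Xᴴ := by
    ext i j
    rw [hψ.2 i j, Matrix.mul_apply]
    simp [hXdef, Matrix.conjTranspose_apply]
  have hY : σ = Y * Yᴴ := by
    ext i j
    rw [hφ.2 i j, Matrix.mul_apply]
    simp [hYdef, Matrix.conjTranspose_apply]
  have hinner : (inner ℂ ψ φ : ℂ) = (Xᴴ * Y).trace := by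
    rw [PiLp.inner_apply, Matrix.trace]
    rw [Fintype.sum_prod_type]
    rw [Finset.sum_comm]
    simp [Matrix.diag, Matrix.mul_apply, Matrix.conjTranspose_apply, hXdef, hYdef,
      RCLike.inner_apply, mul_comm]
  set P := hρ.sqrt with hPdef
  have hP : P.PosSemidef := hρ.posSemidef_sqrt
  have hPP : P * P = ρ := hρ.sqrt_mul_self
  have hT : (P * σ * P).PosSemidef := by
    have h := hσ.conjTranspose_mul_mul_same P
    rwa [hP.isHermitian] at h
  set S := hT.sqrt with hSdef
  have hS : S.PosSemidef := hT.posSemidef_sqrt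
  have hSS : S * S = P * σ * P := hT.sqrt_mul_self
  have hfid : fidelity ρ σ = (S.trace.re) ^ 2 := by
    have e1 : psdSqrt ρ = P := by
      simp only [psdSqrt]
      exact dif_pos hρ
    have e2 : psdSqrt (P * σ * P) = S := by
      simp only [psdSqrt]
      exact dif_pos hT
    simp only [fidelity]
    rw [e1, e2]
  have hsqrtfid : Real.sqrt (fidelity ρ σ) = S.trace.re := by
    rw [hfid, Real.sqrt_sq (trace_re_nonneg' hS)]
  have hkey : ‖(inner ℂ ψ φ : ℂ)‖ ≤ S.trace.re := by
    rw [hinner]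
    exact key_ineq hσ hP hS hPP hSS hX hY
  constructor
  · apply Real.sqrt_le_sqrt
    rw [hsqrtfid]
    linarith
  · have hn1 : ‖ψ‖ = 1 := hψ.1
    have hn2 : ‖φ‖ = 1 := hφ.1
    have hcs : ‖(inner ℂ ψ φ : ℂ)‖ ≤ 1 := by
      have := norm_inner_le_norm (𝕜 := ℂ) ψ φ
      rwa [hn1, hn2, mul_one] at this
    have hsq : ‖ψ - φ‖ ^ 2 = 2 - 2 * (inner ℂ ψ φ : ℂ).re := by
      have h' := @norm_sub_sq ℂ _ _ _ _ ψ φ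
      rw [hn1, hn2, RCLike.re_to_complex] at h'
      rw [h']
      ring
    have hre : (inner ℂ ψ φ : ℂ).re ≤ ‖(inner ℂ ψ φ : ℂ)‖ := Complex.re_le_norm _
    have h2 : 2 - 2 * ‖(inner ℂ ψ φ : ℂ)‖ ≤ ‖ψ - φ‖ ^ 2 := by rw [hsq]; linarith
    calc Real.sqrt (2 - 2 * ‖(inner ℂ ψ φ : ℂ)‖) ≤ Real.sqrt (‖ψ - φ‖ ^ 2) :=
          Real.sqrt_le_sqrt h2
      _ = ‖ψ - φ‖ := Real.sqrt_sq (norm_nonneg _)
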